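/- Let A be a finite alphabet with |A| ≥ 2 and let m, n ≥ 1. If P ⊆ mA^* and Q ⊆ nA^* are finite maximal joinless codes that can be reached from the singleton {(ε,...,ε)} (of m, respectively n, empty strings) by finite sequences of one-step restrictions, then the cartesian product P × Q ⊆ (m+n)A^* is a finite maximal joinless code that can be reached from the (m+n)-tuple of empty strings by a finite sequence of one-step restrictions. -/

import Mathlib

/-- Two `n`-tuples of strings have a join iff they are coordinatewise prefix-comparable. -/
def HasJoin {A : Type*} {n : ℕ} (u v : Fin n → List A) : Prop :=
  ∀ i, u i <+: v i ∨ v i <+: u i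

/-- A joinless code in `nA^*`. -/
def JoinlessCode {A : Type*} {n : ℕ} (S : Set (Fin n → List A)) : Prop :=
  ∀ u ∈ S, ∀ v ∈ S, u ≠ v → ¬ HasJoin u v

/-- A maximal joinless code in `nA^*`. -/
def MaxJoinlessCode {A : Type*} {n : ℕ} (S : Set (Fin n → List A)) : Prop :=
  JoinlessCode S ∧ ∀ T : Set (Fin n → List A), JoinlessCode T → S ⊆ T → S = T

/-- One-step restriction: `Q` is obtained from `P` by replacing some `p ∈ P` by the
set of all `(p_1,...,p_{i-1}, p_i a, p_{i+1},...,p_n)` for `a ∈ A`. -/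
def RestrStep {A : Type*} {n : ℕ} (P Q : Set (Fin n → List A)) : Prop :=
  ∃ p ∈ P, ∃ i : Fin n,
    Q = (P \ {p}) ∪ {q | ∃ a : A, q = Function.update p i (p i ++ [a])}

/-- Reachability by a finite sequence of one-step restrictions. -/
def Reachable {A : Type*} {n : ℕ} (X Y : Set (Fin n → List A)) : Prop :=
  Relation.ReflTransGen RestrStep X Y

namespace Stmt7Aux

variable {A : Type*} {m n : ℕ}

lemma hasJoin_refl (u : Fin n → List A) : HasJoin u u := fun i => Or.inl (List.prefix_refl _)

lemma hasJoin_symm {u v : Fin n → List A} (h : HasJoin u v) : HasJoin v u :=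
  fun i => (h i).symm

lemma complete_of_max {S : Set (Fin n → List A)} (h : MaxJoinlessCode S) :
    ∀ w, ∃ s ∈ S, HasJoin s w := by
  intro w
  by_contra hc
  push_neg at hc
  have hjl : JoinlessCode (S ∪ {w}) := by
    rintro u (hu | rfl) v (hv | rfl) hne
    · exact h.1 u hu v hv hne
    · exact hc u hu
    · exact fun hj => hc v hv (hasJoin_symm hj)
    · exact absurd rfl hne
  have heq := h.2 _ hjl Set.subset_union_left
  have hw : w ∈ S := heq ▸ Set.mem_union_right _ rfl
  exact hc w hw (hasJoin_refl w)

lemma max_of_complete {S : Set (Fin n → List A)} (hj : JoinlessCode S)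
    (hc : ∀ w, ∃ s ∈ S, HasJoin s w) : MaxJoinlessCode S := by
  refine ⟨hj, fun T hT hST => Set.Subset.antisymm hST fun t ht => ?_⟩
  obtain ⟨s, hs, hj'⟩ := hc t
  rcases eq_or_ne s t with rfl | hne
  · exact hs
  · exact absurd hj' (hT s (hST hs) t ht hne)

lemma append_left_eq {p p' : Fin m → List A} {q q' : Fin n → List A}
    (h : Fin.append p q = Fin.append p' q') : p = p' := by
  funext i
  have := congrFun h (Fin.castAdd n i)
  simpa [Fin.append_left] using this

lemma append_right_eq {p p' : Fin m → List A} {q q' : Fin n → List A}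
    (h : Fin.append p q = Fin.append p' q') : q = q' := by
  funext i
  have := congrFun h (Fin.natAdd m i)
  simpa [Fin.append_right] using this

lemma inj_left (q : Fin n → List A) :
    Function.Injective (fun p : Fin m → List A => Fin.append p q) :=
  fun _ _ h => append_left_eq h

lemma inj_right (p : Fin m → List A) :
    Function.Injective (fun q : Fin n → List A => Fin.append p q) :=
  fun _ _ h => append_right_eq h

lemma castAdd_ne_natAdd (i : Fin m) (k : Fin n) :
    (Fin.castAdd n i : Fin (m + n)) ≠ Fin.natAdd m k := by
  simp [Fin.ext_iff]; omega

lemma update_append_left (p : Fin m → List A) (q : Fin n → List A) (i : Fin m) (x : List A) :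
    Fin.append (Function.update p i x) q
      = Function.update (Fin.append p q) (Fin.castAdd n i) x := by
  funext j
  cases j using Fin.addCases with
  | left j =>
      rw [Fin.append_left]
      by_cases hji : j = i
      · subst hji; simp
      · rw [Function.update_apply, Function.update_apply, if_neg hji,
          if_neg (by simpa [Fin.ext_iff] using fun h => hji (Fin.ext h)), Fin.append_left]
  | right j =>
      rw [Fin.append_right, Function.update_apply,
        if_neg (fun h => castAdd_ne_natAdd i j h.symm), Fin.append_right]

lemma update_append_right (p : Fin m → List A) (q : Fin n → List A) (i : Fin n) (x : List A) :
    Fin.append p (Function.update q i x)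
      = Function.update (Fin.append p q) (Fin.natAdd m i) x := by
  funext j
  cases j using Fin.addCases with
  | left j =>
      rw [Fin.append_left, Function.update_apply, if_neg (castAdd_ne_natAdd j i),
        Fin.append_left]
  | right j =>
      rw [Fin.append_right]
      by_cases hji : j = i
      · subst hji; simp
      · rw [Function.update_apply, Function.update_apply, if_neg hji,
          if_neg (by simp [Fin.ext_iff]; exact fun h => hji (Fin.ext h)), Fin.append_right]


lemma restr_left (q0 : Fin n → List A) {P P' : Set (Fin m → List A)}
    (h : RestrStep P P') :
    RestrStep ((fun p => Fin.append p q0) '' P) ((fun p => Fin.append p q0) '' P') := by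
  obtain ⟨p, hp, i, rfl⟩ := h
  refine ⟨Fin.append p q0, ⟨p, hp, rfl⟩, Fin.castAdd n i, ?_⟩
  rw [Set.image_union, Set.image_diff (inj_left q0), Set.image_singleton]
  congr 1
  ext w
  simp only [Set.mem_image, Set.mem_setOf_eq]
  constructor
  · rintro ⟨_, ⟨a, rfl⟩, rfl⟩
    exact ⟨a, by rw [update_append_left, Fin.append_left]⟩
  · rintro ⟨a, rfl⟩
    exact ⟨Function.update p i (p i ++ [a]), ⟨a, rfl⟩,
      by rw [update_append_left, Fin.append_left]⟩

lemma restr_right (p0 : Fin m → List A) {S : Set (Fin (m + n) → List A)}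
    (hS : ∀ q : Fin n → List A, Fin.append p0 q ∉ S)
    {T T' : Set (Fin n → List A)} (h : RestrStep T T') :
    RestrStep (S ∪ (fun q => Fin.append p0 q) '' T)
      (S ∪ (fun q => Fin.append p0 q) '' T') := by
  obtain ⟨t, ht, i, rfl⟩ := h
  refine ⟨Fin.append p0 t, Or.inr ⟨t, ht, rfl⟩, Fin.natAdd m i, ?_⟩
  rw [Set.image_union, Set.image_diff (inj_right p0), Set.image_singleton,
    Set.union_diff_distrib, Set.diff_singleton_eq_self (hS t), Set.union_assoc]
  congr 2
  ext w
  simp only [Set.mem_image, Set.mem_setOf_eq]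
  constructor
  · rintro ⟨_, ⟨a, rfl⟩, rfl⟩
    exact ⟨a, by rw [update_append_right, Fin.append_right]⟩
  · rintro ⟨a, rfl⟩
    exact ⟨Function.update t i (t i ++ [a]), ⟨a, rfl⟩,
      by rw [update_append_right, Fin.append_right]⟩

lemma reach_left (q0 : Fin n → List A) {P P' : Set (Fin m → List A)}
    (h : Reachable P P') :
    Reachable ((fun p => Fin.append p q0) '' P) ((fun p => Fin.append p q0) '' P') :=
  Relation.ReflTransGen.lift _ (fun _ _ h => restr_left q0 h) _ _ h

lemma reach_right (p0 : Fin m → List A) (S : Set (Fin (m + n) → List A))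
    (hS : ∀ q : Fin n → List A, Fin.append p0 q ∉ S)
    {T T' : Set (Fin n → List A)} (h : Reachable T T') :
    Reachable (S ∪ (fun q => Fin.append p0 q) '' T)
      (S ∪ (fun q => Fin.append p0 q) '' T') :=
  Relation.ReflTransGen.lift (fun X => S ∪ (fun q => Fin.append p0 q) '' X)
    (fun _ _ h => restr_right p0 hS h) _ _ h

lemma hasJoin_append {p p' : Fin m → List A} {q q' : Fin n → List A} :
    HasJoin (Fin.append p q) (Fin.append p' q') ↔ HasJoin p p' ∧ HasJoin q q' := by
  constructor
  · intro h
    exact ⟨fun i => by have := h (Fin.castAdd n i); simpa [Fin.append_left] using this,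
      fun i => by have := h (Fin.natAdd m i); simpa [Fin.append_right] using this⟩
  · rintro ⟨h1, h2⟩ i
    cases i using Fin.addCases with
    | left j => simpa [Fin.append_left] using h1 j
    | right j => simpa [Fin.append_right] using h2 j

lemma append_split (w : Fin (m + n) → List A) :
    w = Fin.append (fun i => w (Fin.castAdd n i)) (fun i => w (Fin.natAdd m i)) := by
  funext j
  cases j using Fin.addCases with
  | left j => rw [Fin.append_left]
  | right j => rw [Fin.append_right]


def St (Q : Set (Fin n → List A)) (P s : Set (Fin m → List A)) :
    Set (Fin (m + n) → List A) :=
  {w | ∃ p ∈ s, ∃ q ∈ Q, w = Fin.append p q}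
    ∪ (fun p => Fin.append p (fun _ => ([] : List A))) '' (P \ s)

lemma stepB [DecidableEq (Fin m → List A)] {P : Set (Fin m → List A)}
    {Q : Set (Fin n → List A)}
    (hQreach : Reachable ({fun _ => ([] : List A)} : Set (Fin n → List A)) Q)
    (s : Finset (Fin m → List A)) (hsub : ↑s ⊆ P) :
    Reachable (St Q P ∅) (St Q P ↑s) := by
  revert hsub
  induction s using Finset.induction_on with
  | empty => intro _; simp only [Finset.coe_empty]; exact Relation.ReflTransGen.refl
  | @insert a s ha ih =>
    intro hsub
    have haP : a ∈ P := hsub (by simp)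
    have hsP : (↑s : Set (Fin m → List A)) ⊆ P := fun x hx => hsub (by simp [Finset.mem_coe.mp hx])
    have haS : a ∉ (↑s : Set (Fin m → List A)) := fun h => ha (Finset.mem_coe.mp h)
    refine (ih hsP).trans ?_
    set Sset := ({w | ∃ p ∈ (↑s : Set (Fin m → List A)), ∃ q ∈ Q, w = Fin.append p q}
        ∪ (fun p => Fin.append p (fun _ => ([] : List A))) '' (P \ ↑(insert a s)))
      with hSdef
    have hnot : ∀ q : Fin n → List A, Fin.append a q ∉ Sset := by
      rintro q (⟨p', hp', q', hq', heq⟩ | ⟨p', hp', heq⟩)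
      · exact haS (append_left_eq heq ▸ hp')
      · have h1 : p' = a := append_left_eq heq
        have : p' ∈ (↑(insert a s) : Set (Fin m → List A)) := by
          rw [h1]; simp
        exact hp'.2 this
    have hsplit : P \ (↑s : Set (Fin m → List A)) = (P \ ↑(insert a s)) ∪ {a} := by
      ext x
      simp only [Set.mem_diff, Finset.coe_insert, Set.mem_insert_iff, Set.mem_union,
        Set.mem_singleton_iff, Finset.mem_coe]
      constructor
      · rintro ⟨hxP, hxs⟩
        by_cases hxa : x = a
        · exact Or.inr hxa
        · exact Or.inl ⟨hxP, fun h => h.elim hxa hxs⟩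
      · rintro (⟨hxP, hx⟩ | rfl)
        · exact ⟨hxP, fun h => hx (Or.inr h)⟩
        · exact ⟨haP, fun h => haS h⟩
    have hE1 : St Q P ↑s
        = Sset ∪ (fun q => Fin.append a q) '' ({fun _ => ([] : List A)} :
            Set (Fin n → List A)) := by
      simp only [St, hsplit, Set.image_union, Set.image_singleton, hSdef]
      rw [← Set.union_assoc]
    have hE2 : St Q P ↑(insert a s) = Sset ∪ (fun q => Fin.append a q) '' Q := by
      simp only [St, hSdef]
      have hblocks : {w | ∃ p ∈ (↑(insert a s) : Set (Fin m → List A)), ∃ q ∈ Q,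
            w = Fin.append p q}
          = {w | ∃ p ∈ (↑s : Set (Fin m → List A)), ∃ q ∈ Q, w = Fin.append p q}
            ∪ (fun q => Fin.append a q) '' Q := by
        ext w
        simp only [Finset.coe_insert, Set.mem_insert_iff, Set.mem_setOf_eq, Set.mem_union,
          Set.mem_image, Finset.mem_coe]
        constructor
        · rintro ⟨p, (rfl | hps), q, hq, rfl⟩
          · exact Or.inr ⟨q, hq, rfl⟩
          · exact Or.inl ⟨p, hps, q, hq, rfl⟩
        · rintro (⟨p, hps, q, hq, rfl⟩ | ⟨q, hq, rfl⟩)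
          · exact ⟨p, Or.inr hps, q, hq, rfl⟩
          · exact ⟨a, Or.inl rfl, q, hq, rfl⟩
      rw [hblocks, Set.union_right_comm]
    rw [hE1, hE2]
    exact reach_right a Sset hnot hQreach


lemma St_empty (Q : Set (Fin n → List A)) (P : Set (Fin m → List A)) :
    St Q P ∅ = (fun p => Fin.append p (fun _ => ([] : List A))) '' P := by
  simp [St]

lemma St_full (Q : Set (Fin n → List A)) (P : Set (Fin m → List A)) :
    St Q P P = {w | ∃ p ∈ P, ∃ q ∈ Q, w = Fin.append p q} := by
  simp [St]

end Stmt7Aux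

open Stmt7Aux

/-- If `P ⊆ mA^*` and `Q ⊆ nA^*` are finite maximal joinless codes reachable from the
tuple of empty strings by one-step restrictions, then `P × Q ⊆ (m+n)A^*` is a finite
maximal joinless code reachable from the tuple of empty strings by one-step restrictions. -/
theorem stmt_7 {A : Type*} [Fintype A] (hA : 2 ≤ Fintype.card A)
    {m n : ℕ} (hm : 1 ≤ m) (hn : 1 ≤ n)
    (P : Set (Fin m → List A)) (Q : Set (Fin n → List A))
    (hPfin : P.Finite) (hQfin : Q.Finite)
    (hP : MaxJoinlessCode P) (hQ : MaxJoinlessCode Q)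
    (hPreach : Reachable {fun _ => ([] : List A)} P)
    (hQreach : Reachable {fun _ => ([] : List A)} Q) :
    ({w : Fin (m + n) → List A | ∃ p ∈ P, ∃ q ∈ Q, w = Fin.append p q}).Finite ∧
    MaxJoinlessCode {w : Fin (m + n) → List A | ∃ p ∈ P, ∃ q ∈ Q, w = Fin.append p q} ∧
    Reachable {fun _ => ([] : List A)}
      {w : Fin (m + n) → List A | ∃ p ∈ P, ∃ q ∈ Q, w = Fin.append p q} := by
  classical
  refine ⟨?_, ?_, ?_⟩
  · have himg : {w : Fin (m + n) → List A | ∃ p ∈ P, ∃ q ∈ Q, w = Fin.append p q}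
        = (fun x : (Fin m → List A) × (Fin n → List A) => Fin.append x.1 x.2) '' (P ×ˢ Q) := by
      ext w
      simp only [Set.mem_setOf_eq, Set.mem_image, Set.mem_prod, Prod.exists]
      constructor
      · rintro ⟨p, hp, q, hq, rfl⟩; exact ⟨p, q, ⟨hp, hq⟩, rfl⟩
      · rintro ⟨p, q, ⟨hp, hq⟩, rfl⟩; exact ⟨p, hp, q, hq, rfl⟩
    rw [himg]
    exact (hPfin.prod hQfin).image _
  · refine max_of_complete ?_ ?_
    · rintro u ⟨p, hp, q, hq, rfl⟩ v ⟨p', hp', q', hq', rfl⟩ hne hj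
      rw [hasJoin_append] at hj
      rcases eq_or_ne p p' with rfl | hpp
      · rcases eq_or_ne q q' with rfl | hqq
        · exact hne rfl
        · exact hQ.1 q hq q' hq' hqq hj.2
      · exact hP.1 p hp p' hp' hpp hj.1
    · intro w
      obtain ⟨p, hp, hjp⟩ := complete_of_max hP (fun i => w (Fin.castAdd n i))
      obtain ⟨q, hq, hjq⟩ := complete_of_max hQ (fun i => w (Fin.natAdd m i))
      refine ⟨Fin.append p q, ⟨p, hp, q, hq, rfl⟩, ?_⟩
      have h := hasJoin_append.mpr ⟨hjp, hjq⟩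
      rwa [← append_split w] at h
  · have stepA : Reachable ({fun _ => ([] : List A)} : Set (Fin (m + n) → List A))
        ((fun p => Fin.append p (fun _ => ([] : List A))) '' P) := by
      have h := reach_left (n := n) (fun _ => ([] : List A)) hPreach
      have hsing : (fun p : Fin m → List A => Fin.append p (fun _ => ([] : List A)))
          '' {fun _ => []} = ({fun _ => []} : Set (Fin (m + n) → List A)) := by
        rw [Set.image_singleton]
        congr 1
        funext j
        cases j using Fin.addCases with
        | left j => rw [Fin.append_left]
        | right j => rw [Fin.append_right]
      rwa [hsing] at h
    have hB := stepB (m := m) hQreach hPfin.toFinset (by rw [hPfin.coe_toFinset])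
    rw [St_empty, hPfin.coe_toFinset, St_full] at hB
    exact stepA.trans hB
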